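/- Let C be a binary self-complementary code of length n whose set of occurring nonzero distances is {n/2−α, n/2, n/2+α, n}, where α is an integer with 0 < α < n/2. If 3n − 4α² − 2 > 0, then |C| ≤ ⌊2n(n² − 4α²)/(3n − 4α² − 2)⌋. -/

import Mathlib

namespace SC11

def fsgn {n : ℕ} (x : Fin n → ZMod 2) (i : Fin n) : ℤ := if x i = 0 then 1 else -1

lemma fsgn_sq {n : ℕ} (x : Fin n → ZMod 2) (i : Fin n) : fsgn x i * fsgn x i = 1 := by
  unfold fsgn; split <;> norm_num

lemma fsgn_mul {n : ℕ} (x y : Fin n → ZMod 2) (i : Fin n) :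
    fsgn x i * fsgn y i = if x i = y i then 1 else -1 := by
  have h : ∀ a b : ZMod 2,
      ((if a = 0 then (1:ℤ) else -1) * if b = 0 then 1 else -1) = if a = b then 1 else -1 := by
    decide
  exact h (x i) (y i)

def ip {n : ℕ} (x y : Fin n → ZMod 2) : ℤ := ∑ i, fsgn x i * fsgn y i

lemma ip_eq {n : ℕ} (x y : Fin n → ZMod 2) :
    ip x y = (n : ℤ) - 2 * (hammingDist x y : ℤ) := by
  unfold ip
  rw [hammingDist]
  have h : ∀ i : Fin n, fsgn x i * fsgn y i = 1 - 2 * (if x i ≠ y i then (1:ℤ) else 0) := by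
    intro i; rw [fsgn_mul]; split <;> simp_all
  rw [Finset.sum_congr rfl (fun i _ => h i), Finset.sum_sub_distrib]
  simp [Finset.sum_ite, Finset.mul_sum]
  ring_nf

lemma hd_add_one {n : ℕ} (x y : Fin n → ZMod 2) :
    hammingDist x (y + 1) = n - hammingDist x y := by
  have key : ∀ a b : ZMod 2, (a ≠ b + 1) ↔ ¬ (a ≠ b) := by decide
  rw [hammingDist, hammingDist]
  have h1 : (Finset.univ.filter fun i => x i ≠ (y + 1) i)
      = Finset.univ.filter (fun i => ¬ (x i ≠ y i)) := by
    apply Finset.filter_congr; intro i _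
    simp only [Pi.add_apply, Pi.one_apply]
    exact key (x i) (y i)
  rw [h1, Finset.filter_not, Finset.card_sdiff_of_subset (Finset.filter_subset _ _)]
  simp [Finset.card_univ]

lemma hd_self_add_one {n : ℕ} (x : Fin n → ZMod 2) : hammingDist x (x + 1) = n := by
  rw [hd_add_one, hammingDist_self]; omega

lemma eq_add_one_of_hd {n : ℕ} (x y : Fin n → ZMod 2) (h : hammingDist x y = n) :
    y = x + 1 := by
  have key : ∀ a b : ZMod 2, a ≠ b → b = a + 1 := by decide
  have hfull : (Finset.univ.filter fun i => x i ≠ y i) = Finset.univ := by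
    apply Finset.eq_univ_of_card
    rw [← hammingDist, h, Fintype.card_fin]
  funext i
  have hmem : i ∈ Finset.univ.filter fun i => x i ≠ y i := by
    rw [hfull]; exact Finset.mem_univ i
  have hne : x i ≠ y i := (Finset.mem_filter.mp hmem).2
  simp only [Pi.add_apply, Pi.one_apply]
  exact key _ _ hne

lemma add_one_ne_self {n : ℕ} (hn : 0 < n) (x : Fin n → ZMod 2) : x + 1 ≠ x := by
  intro h
  have h0 := congrFun h ⟨0, hn⟩
  simp only [Pi.add_apply, Pi.one_apply] at h0
  have key : ∀ a : ZMod 2, a + 1 ≠ a := by decide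
  exact key _ h0

lemma sq_sum {ι : Type*} [Fintype ι] (a : ι → ℤ) :
    (∑ i, a i) ^ 2 = ∑ q : ι × ι, a q.1 * a q.2 := by
  rw [sq, Finset.sum_mul_sum, ← Finset.univ_product_univ, Finset.sum_product]

lemma exchange2 {ι κ : Type*} [Fintype ι] [DecidableEq κ] (s : Finset κ) (g : κ → ι → ℤ) :
    ∑ p ∈ s ×ˢ s, (∑ i, g p.1 i * g p.2 i) ^ 2
      = ∑ q : ι × ι, (∑ x ∈ s, g x q.1 * g x q.2) ^ 2 := by
  have h1 : ∀ p : κ × κ, (∑ i, g p.1 i * g p.2 i) ^ 2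
      = ∑ q : ι × ι, (g p.1 q.1 * g p.1 q.2) * (g p.2 q.1 * g p.2 q.2) := by
    intro p
    rw [sq_sum]
    exact Finset.sum_congr rfl fun q _ => by ring
  have h2 : ∀ q : ι × ι, (∑ x ∈ s, g x q.1 * g x q.2) ^ 2
      = ∑ p ∈ s ×ˢ s, (g p.1 q.1 * g p.1 q.2) * (g p.2 q.1 * g p.2 q.2) := by
    intro q
    rw [sq, Finset.sum_mul_sum, Finset.sum_product]
  simp_rw [h1, h2]
  exact Finset.sum_comm

lemma exchange4 {ι κ : Type*} [Fintype ι] [DecidableEq κ] (s : Finset κ) (g : κ → ι → ℤ) :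
    ∑ p ∈ s ×ˢ s, (∑ i, g p.1 i * g p.2 i) ^ 4
      = ∑ q : (ι × ι) × ι × ι,
          (∑ x ∈ s, g x q.1.1 * g x q.1.2 * g x q.2.1 * g x q.2.2) ^ 2 := by
  have h1 : ∀ p : κ × κ, (∑ i, g p.1 i * g p.2 i) ^ 4
      = ∑ q : (ι × ι) × ι × ι,
          (g p.1 q.1.1 * g p.1 q.1.2 * g p.1 q.2.1 * g p.1 q.2.2)
            * (g p.2 q.1.1 * g p.2 q.1.2 * g p.2 q.2.1 * g p.2 q.2.2) := by
    intro p
    have h4 : (∑ i, g p.1 i * g p.2 i) ^ 4 = ((∑ i, g p.1 i * g p.2 i) ^ 2) ^ 2 := by ring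
    rw [h4, sq_sum, sq_sum]
    exact Finset.sum_congr rfl fun q _ => by ring
  have h2 : ∀ q : (ι × ι) × ι × ι,
      (∑ x ∈ s, g x q.1.1 * g x q.1.2 * g x q.2.1 * g x q.2.2) ^ 2
      = ∑ p ∈ s ×ˢ s,
          (g p.1 q.1.1 * g p.1 q.1.2 * g p.1 q.2.1 * g p.1 q.2.2)
            * (g p.2 q.1.1 * g p.2 q.1.2 * g p.2 q.2.1 * g p.2 q.2.2) := by
    intro q
    rw [sq, Finset.sum_mul_sum, Finset.sum_product]
  simp_rw [h1, h2]
  exact Finset.sum_comm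

lemma peel {n : ℕ} (hn : 2 ≤ n) (B : Fin n → Fin n → ℤ)
    (T : Fin n → Fin n → Fin n → Fin n → ℤ)
    (hT1 : ∀ i k l, T i i k l = B k l)
    (hT2 : ∀ i j l, T i j i l = B j l)
    (hT3 : ∀ i j l, T i j j l = B i l) :
    (3 * (n : ℤ) - 2) * (∑ i, ∑ j, (B i j) ^ 2)
      ≤ ∑ i, ∑ j, ∑ k, ∑ l, (T i j k l) ^ 2 := by
  set Q2 : ℤ := ∑ i, ∑ j, (B i j) ^ 2 with hQ2
  have hcard : ∀ i : Fin n, (((Finset.univ.erase i).card : ℤ)) = (n : ℤ) - 1 := by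
    intro i
    rw [Finset.card_erase_of_mem (Finset.mem_univ i), Finset.card_univ, Fintype.card_fin]
    omega
  have key : ∀ i : Fin n,
      2 * Q2 + ((n : ℤ) - 2) * (∑ l, (B i l) ^ 2) ≤ ∑ j, ∑ k, ∑ l, (T i j k l) ^ 2 := by
    intro i
    have step1 : ∑ j, ∑ k, ∑ l, (T i j k l) ^ 2
        = (∑ k, ∑ l, (T i i k l) ^ 2)
          + ∑ j ∈ Finset.univ.erase i, ∑ k, ∑ l, (T i j k l) ^ 2 :=
      (Finset.add_sum_erase _ _ (Finset.mem_univ i)).symm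
    have hQ2' : (∑ k, ∑ l, (T i i k l) ^ 2) = Q2 := by
      rw [hQ2]
      exact Finset.sum_congr rfl fun k _ => Finset.sum_congr rfl fun l _ => by rw [hT1]
    have step2 : ∀ j : Fin n, j ≠ i →
        (∑ l, (B j l) ^ 2) + (∑ l, (B i l) ^ 2) ≤ ∑ k, ∑ l, (T i j k l) ^ 2 := by
      intro j hji
      have hpair : ∑ k ∈ ({i, j} : Finset (Fin n)), ∑ l, (T i j k l) ^ 2
          = (∑ l, (T i j i l) ^ 2) + (∑ l, (T i j j l) ^ 2) :=
        Finset.sum_pair (Ne.symm hji)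
      have hle : ∑ k ∈ ({i, j} : Finset (Fin n)), ∑ l, (T i j k l) ^ 2
          ≤ ∑ k, ∑ l, (T i j k l) ^ 2 :=
        Finset.sum_le_sum_of_subset_of_nonneg (Finset.subset_univ _)
          (fun k _ _ => Finset.sum_nonneg fun l _ => sq_nonneg _)
      calc (∑ l, (B j l) ^ 2) + (∑ l, (B i l) ^ 2)
          = (∑ l, (T i j i l) ^ 2) + (∑ l, (T i j j l) ^ 2) := by
            congr 1
            · exact (Finset.sum_congr rfl fun l _ => by rw [hT2]).symm
            · exact (Finset.sum_congr rfl fun l _ => by rw [hT3]).symm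
        _ = ∑ k ∈ ({i, j} : Finset (Fin n)), ∑ l, (T i j k l) ^ 2 := hpair.symm
        _ ≤ _ := hle
    have step3 : ∑ j ∈ Finset.univ.erase i, ((∑ l, (B j l) ^ 2) + (∑ l, (B i l) ^ 2))
        ≤ ∑ j ∈ Finset.univ.erase i, ∑ k, ∑ l, (T i j k l) ^ 2 :=
      Finset.sum_le_sum fun j hj => step2 j (Finset.mem_erase.mp hj).1
    have step4 : ∑ j ∈ Finset.univ.erase i, ((∑ l, (B j l) ^ 2) + (∑ l, (B i l) ^ 2))
        = (Q2 - ∑ l, (B i l) ^ 2) + ((n : ℤ) - 1) * (∑ l, (B i l) ^ 2) := by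
      rw [Finset.sum_add_distrib, Finset.sum_const, Finset.sum_erase_eq_sub (Finset.mem_univ i)]
      rw [nsmul_eq_mul, hcard i]
    calc 2 * Q2 + ((n : ℤ) - 2) * (∑ l, (B i l) ^ 2)
        = Q2 + ((Q2 - ∑ l, (B i l) ^ 2) + ((n : ℤ) - 1) * (∑ l, (B i l) ^ 2)) := by ring
      _ ≤ Q2 + ∑ j ∈ Finset.univ.erase i, ∑ k, ∑ l, (T i j k l) ^ 2 := by
          rw [← step4] at *; exact add_le_add_right step3 _
      _ = ∑ j, ∑ k, ∑ l, (T i j k l) ^ 2 := by rw [step1, hQ2']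
  have total : ∑ i : Fin n, (2 * Q2 + ((n : ℤ) - 2) * (∑ l, (B i l) ^ 2))
      ≤ ∑ i, ∑ j, ∑ k, ∑ l, (T i j k l) ^ 2 :=
    Finset.sum_le_sum fun i _ => key i
  have lhs_eq : ∑ i : Fin n, (2 * Q2 + ((n : ℤ) - 2) * (∑ l, (B i l) ^ 2))
      = (3 * (n : ℤ) - 2) * Q2 := by
    rw [Finset.sum_add_distrib, Finset.sum_const, ← Finset.mul_sum]
    rw [Finset.card_univ, Fintype.card_fin, nsmul_eq_mul]
    have hQ : (∑ i : Fin n, ∑ l, (B i l) ^ 2) = Q2 := rfl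
    rw [hQ]
    ring
  linarith [total, lhs_eq.symm.le]

def Bm {n : ℕ} (C : Finset (Fin n → ZMod 2)) (i j : Fin n) : ℤ :=
  ∑ x ∈ C, fsgn x i * fsgn x j

def Tm {n : ℕ} (C : Finset (Fin n → ZMod 2)) (i j k l : Fin n) : ℤ :=
  ∑ x ∈ C, fsgn x i * fsgn x j * fsgn x k * fsgn x l

lemma Q2_eq {n : ℕ} (C : Finset (Fin n → ZMod 2)) :
    ∑ p ∈ C ×ˢ C, (ip p.1 p.2) ^ 2 = ∑ i, ∑ j, (Bm C i j) ^ 2 := by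
  have h := exchange2 C (fun x i => fsgn x i)
  rw [Fintype.sum_prod_type] at h
  exact h

lemma Q4_eq {n : ℕ} (C : Finset (Fin n → ZMod 2)) :
    ∑ p ∈ C ×ˢ C, (ip p.1 p.2) ^ 4 = ∑ i, ∑ j, ∑ k, ∑ l, (Tm C i j k l) ^ 2 := by
  have h := exchange4 C (fun x i => fsgn x i)
  simp only [Fintype.sum_prod_type] at h
  exact h

lemma Tm1 {n : ℕ} (C : Finset (Fin n → ZMod 2)) (i k l : Fin n) : Tm C i i k l = Bm C k l := by
  refine Finset.sum_congr rfl fun x _ => ?_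
  calc fsgn x i * fsgn x i * fsgn x k * fsgn x l
      = (fsgn x i * fsgn x i) * (fsgn x k * fsgn x l) := by ring
    _ = fsgn x k * fsgn x l := by rw [fsgn_sq]; ring

lemma Tm2 {n : ℕ} (C : Finset (Fin n → ZMod 2)) (i j l : Fin n) : Tm C i j i l = Bm C j l := by
  refine Finset.sum_congr rfl fun x _ => ?_
  calc fsgn x i * fsgn x j * fsgn x i * fsgn x l
      = (fsgn x i * fsgn x i) * (fsgn x j * fsgn x l) := by ring
    _ = fsgn x j * fsgn x l := by rw [fsgn_sq]; ring

lemma Tm3 {n : ℕ} (C : Finset (Fin n → ZMod 2)) (i j l : Fin n) : Tm C i j j l = Bm C i l := by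
  refine Finset.sum_congr rfl fun x _ => ?_
  calc fsgn x i * fsgn x j * fsgn x j * fsgn x l
      = (fsgn x j * fsgn x j) * (fsgn x i * fsgn x l) := by ring
    _ = fsgn x i * fsgn x l := by rw [fsgn_sq]; ring

lemma Bm_diag {n : ℕ} (C : Finset (Fin n → ZMod 2)) (i : Fin n) : Bm C i i = (C.card : ℤ) := by
  unfold Bm
  rw [Finset.sum_congr rfl fun x _ => fsgn_sq x i, Finset.sum_const, nsmul_eq_mul, mul_one]

lemma Q2_ge {n : ℕ} (C : Finset (Fin n → ZMod 2)) :
    (n : ℤ) * (C.card : ℤ) ^ 2 ≤ ∑ i, ∑ j, (Bm C i j) ^ 2 := by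
  have h1 : ∀ i : Fin n, ((C.card : ℤ)) ^ 2 ≤ ∑ j, (Bm C i j) ^ 2 := by
    intro i
    have h := Finset.single_le_sum (f := fun j => (Bm C i j) ^ 2)
      (fun j _ => sq_nonneg _) (Finset.mem_univ i)
    simpa [Bm_diag] using h
  calc (n : ℤ) * (C.card : ℤ) ^ 2 = ∑ _i : Fin n, ((C.card : ℤ)) ^ 2 := by
        rw [Finset.sum_const, Finset.card_univ, Fintype.card_fin, nsmul_eq_mul]
    _ ≤ _ := Finset.sum_le_sum fun i _ => h1 i

end SC11

open SC11 in
theorem stmt_11 (n α : ℕ) (hα1 : 0 < α) (hα2 : α < n / 2)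
    (C : Finset (Fin n → ZMod 2))
    (hsc : ∀ x ∈ C, x + 1 ∈ C)
    (hdist : {i : ℕ | ∃ x ∈ C, ∃ y ∈ C, x ≠ y ∧ hammingDist x y = i} =
      {n / 2 - α, n / 2, n / 2 + α, n})
    (hpos : (0 : ℤ) < 3 * (n : ℤ) - 4 * (α : ℤ) ^ 2 - 2) :
    (C.card : ℤ) * (3 * (n : ℤ) - 4 * (α : ℤ) ^ 2 - 2) ≤
      2 * (n : ℤ) * ((n : ℤ) ^ 2 - 4 * (α : ℤ) ^ 2) := by
  classical
  have hn4 : 4 ≤ n := by omega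
  have hattain : ∀ d : ℕ, d ∈ ({n / 2 - α, n / 2, n / 2 + α, n} : Set ℕ) →
      ∃ x ∈ C, ∃ y ∈ C, x ≠ y ∧ hammingDist x y = d := by
    intro d hd
    rw [← hdist] at hd
    exact hd
  have hclosed : ∀ x ∈ C, ∀ y ∈ C, x ≠ y → hammingDist x y < n →
      (n - hammingDist x y) ∈ ({n / 2 - α, n / 2, n / 2 + α, n} : Set ℕ) := by
    intro x hx y hy hxy hlt
    rw [← hdist]
    refine ⟨x, hx, y + 1, hsc y hy, ?_, hd_add_one x y⟩
    intro hcontr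
    have h0 := hd_add_one x y
    rw [← hcontr, hammingDist_self] at h0
    omega
  have heven : n % 2 = 0 := by
    by_contra hodd
    obtain ⟨x, hx, y, hy, hxy, hd⟩ := hattain (n / 2)
      (by simp only [Set.mem_insert_iff, Set.mem_singleton_iff]; tauto)
    have h1 := hclosed x hx y hy hxy (by omega)
    rw [hd] at h1
    simp only [Set.mem_insert_iff, Set.mem_singleton_iff] at h1
    have hα1' : α = 1 := by omega
    obtain ⟨x2, hx2, y2, hy2, hxy2, hd2⟩ := hattain (n / 2 - α)
      (by simp only [Set.mem_insert_iff, Set.mem_singleton_iff]; tauto)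
    have h2 := hclosed x2 hx2 y2 hy2 hxy2 (by omega)
    rw [hd2] at h2
    simp only [Set.mem_insert_iff, Set.mem_singleton_iff] at h2
    omega
  -- the per-row sum
  have hinner : ∀ x ∈ C, (∑ y ∈ C, ((ip x y) ^ 4 - 4 * (α : ℤ) ^ 2 * (ip x y) ^ 2))
      = 2 * (n : ℤ) ^ 2 * ((n : ℤ) ^ 2 - 4 * (α : ℤ) ^ 2) := by
    intro x hx
    have hx1 : x + 1 ∈ C := hsc x hx
    have hne : x + 1 ≠ x := add_one_ne_self (by omega) x
    have hipxx : ip x x = (n : ℤ) := by rw [ip_eq, hammingDist_self]; push_cast; ring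
    have hipx1 : ip x (x + 1) = -(n : ℤ) := by rw [ip_eq, hd_self_add_one]; ring
    have hzero : ∀ y ∈ (C.erase x).erase (x + 1),
        ((ip x y) ^ 4 - 4 * (α : ℤ) ^ 2 * (ip x y) ^ 2) = 0 := by
      intro y hy
      have hyx1 : y ≠ x + 1 := (Finset.mem_erase.mp hy).1
      have hyx : y ≠ x := (Finset.mem_erase.mp (Finset.mem_erase.mp hy).2).1
      have hyC : y ∈ C := (Finset.mem_erase.mp (Finset.mem_erase.mp hy).2).2
      have hdmem : hammingDist x y ∈ ({n / 2 - α, n / 2, n / 2 + α, n} : Set ℕ) := by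
        rw [← hdist]
        exact ⟨x, hx, y, hyC, fun h => hyx h.symm, rfl⟩
      simp only [Set.mem_insert_iff, Set.mem_singleton_iff] at hdmem
      have hdn : hammingDist x y ≠ n := fun h => hyx1 (eq_add_one_of_hd x y h)
      have hu : ip x y = 2 * (α : ℤ) ∨ ip x y = 0 ∨ ip x y = -(2 * (α : ℤ)) := by
        rw [ip_eq]
        rcases hdmem with h | h | h | h
        · left; omega
        · right; left; omega
        · right; right; omega
        · exact absurd h hdn
      rcases hu with h | h | h <;> rw [h] <;> ring
    rw [← Finset.add_sum_erase _ _ hx,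
      ← Finset.add_sum_erase _ _ (Finset.mem_erase.mpr ⟨hne, hx1⟩),
      Finset.sum_eq_zero hzero, hipxx, hipx1]
    ring
  have hsumW : ∑ p ∈ C ×ˢ C, ((ip p.1 p.2) ^ 4 - 4 * (α : ℤ) ^ 2 * (ip p.1 p.2) ^ 2)
      = (C.card : ℤ) * (2 * (n : ℤ) ^ 2 * ((n : ℤ) ^ 2 - 4 * (α : ℤ) ^ 2)) := by
    rw [Finset.sum_product, Finset.sum_congr rfl hinner, Finset.sum_const, nsmul_eq_mul]
  have hsplit : ∑ p ∈ C ×ˢ C, ((ip p.1 p.2) ^ 4 - 4 * (α : ℤ) ^ 2 * (ip p.1 p.2) ^ 2)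
      = (∑ p ∈ C ×ˢ C, (ip p.1 p.2) ^ 4)
        - 4 * (α : ℤ) ^ 2 * (∑ p ∈ C ×ˢ C, (ip p.1 p.2) ^ 2) := by
    rw [Finset.sum_sub_distrib, Finset.mul_sum]
  have hpeel := peel (by omega) (Bm C) (Tm C) (Tm1 C) (Tm2 C) (Tm3 C)
  set N : ℤ := (C.card : ℤ) with hN
  set Q2v : ℤ := ∑ i, ∑ j, (Bm C i j) ^ 2 with hQ2v
  set Q4v : ℤ := ∑ i, ∑ j, ∑ k, ∑ l, (Tm C i j k l) ^ 2 with hQ4v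
  have c1 : N * (2 * (n : ℤ) ^ 2 * ((n : ℤ) ^ 2 - 4 * (α : ℤ) ^ 2))
      = Q4v - 4 * (α : ℤ) ^ 2 * Q2v := by
    rw [← hsumW, hsplit, Q4_eq, Q2_eq]
  have c2 : (3 * (n : ℤ) - 4 * (α : ℤ) ^ 2 - 2) * Q2v ≤ Q4v - 4 * (α : ℤ) ^ 2 * Q2v := by
    have h := sub_le_sub_right hpeel (4 * (α : ℤ) ^ 2 * Q2v)
    calc (3 * (n : ℤ) - 4 * (α : ℤ) ^ 2 - 2) * Q2v
        = (3 * (n : ℤ) - 2) * Q2v - 4 * (α : ℤ) ^ 2 * Q2v := by ring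
      _ ≤ Q4v - 4 * (α : ℤ) ^ 2 * Q2v := h
  have c3 : (3 * (n : ℤ) - 4 * (α : ℤ) ^ 2 - 2) * ((n : ℤ) * N ^ 2)
      ≤ (3 * (n : ℤ) - 4 * (α : ℤ) ^ 2 - 2) * Q2v :=
    mul_le_mul_of_nonneg_left (Q2_ge C) hpos.le
  have main : (3 * (n : ℤ) - 4 * (α : ℤ) ^ 2 - 2) * ((n : ℤ) * N ^ 2)
      ≤ N * (2 * (n : ℤ) ^ 2 * ((n : ℤ) ^ 2 - 4 * (α : ℤ) ^ 2)) := by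
    rw [c1]
    exact le_trans c3 c2
  by_cases hN0 : C.card = 0
  · have hNz : N = 0 := by rw [hN, hN0]; norm_num
    rw [hNz, zero_mul]
    have h2α : 2 * (α : ℤ) ≤ (n : ℤ) := by
      have : 2 * α ≤ n := by omega
      exact_mod_cast this
    have hα0 : (0:ℤ) ≤ (α : ℤ) := Int.natCast_nonneg _
    nlinarith
  · have hNpos : 0 < N := by
      rw [hN]
      exact_mod_cast Nat.pos_of_ne_zero hN0
    have hnpos : (0 : ℤ) < (n : ℤ) := by exact_mod_cast (by omega : 0 < n)
    refine le_of_mul_le_mul_left ?_ (mul_pos hnpos hNpos)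
    calc (n : ℤ) * N * (N * (3 * (n : ℤ) - 4 * (α : ℤ) ^ 2 - 2))
        = (3 * (n : ℤ) - 4 * (α : ℤ) ^ 2 - 2) * ((n : ℤ) * N ^ 2) := by ring
      _ ≤ N * (2 * (n : ℤ) ^ 2 * ((n : ℤ) ^ 2 - 4 * (α : ℤ) ^ 2)) := main
      _ = (n : ℤ) * N * (2 * (n : ℤ) * ((n : ℤ) ^ 2 - 4 * (α : ℤ) ^ 2)) := by ring
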